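/- Generalized divided differences satisfy the recursion f^{⟨k+1⟩}(v₀,…,v_{k+1}; s₀,…,s_{k+1}) = (f^{⟨k⟩}(v₀,…,v_k; s₀,…,s_k) − f^{⟨k⟩}(v₀,…,v_{k−1}, v_k + (s_{k+1}−s_k)v_{k+1}; s₀,…,s_{k−1}, s_{k+1}))/(s_k − s_{k+1}), for non-singular s. -/

import Mathlib

open Finset

section helpers

variable {K : Type*} [CommRing K]

lemma myIic_castSucc {n : ℕ} (i : Fin n) :
    Finset.Iic (Fin.castSucc i) = (Finset.Iic i).map Fin.castSuccEmb := by
  apply Finset.map_injective Fin.valEmbedding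
  rw [Finset.map_map, Fin.map_valEmbedding_Iic]
  exact (Fin.map_valEmbedding_Iic i).symm

lemma myIic_last {n : ℕ} : Finset.Iic (Fin.last n) = Finset.univ := by
  ext j; simp [Fin.le_last]

lemma myIio_last {n : ℕ} :
    Finset.Iio (Fin.last n) = Finset.univ.map Fin.castSuccEmb := Fin.Iio_last_eq_map

lemma myuniv_castSucc {n : ℕ} :
    (Finset.univ : Finset (Fin (n+1))) = insert (Fin.last n) (Finset.univ.map Fin.castSuccEmb) := by
  ext j
  simp [Fin.eq_castSucc_or_eq_last j |>.symm]
  rcases Fin.eq_castSucc_or_eq_last j with ⟨i, rfl⟩ | rfl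
  · exact Or.inr ⟨i, rfl⟩
  · exact Or.inl rfl

lemma last_not_mem_map {n : ℕ} (s : Finset (Fin n)) :
    Fin.last n ∉ s.map Fin.castSuccEmb := by
  simp only [Finset.mem_map]
  rintro ⟨i, _, hi⟩
  exact (Fin.castSucc_lt_last i).ne hi

lemma prod_erase_last {n : ℕ} {M : Type*} [CommMonoid M] (g : Fin (n+1) → M) :
    ∏ j ∈ Finset.univ.erase (Fin.last n), g j = ∏ j : Fin n, g (Fin.castSucc j) := by
  rw [myuniv_castSucc, Finset.erase_insert (last_not_mem_map _), Finset.prod_map]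
  rfl

lemma prod_erase_cs {n : ℕ} {M : Type*} [CommMonoid M] (g : Fin (n+1) → M) (i : Fin n) :
    ∏ j ∈ Finset.univ.erase (Fin.castSucc i), g j
      = (∏ j ∈ Finset.univ.erase i, g (Fin.castSucc j)) * g (Fin.last n) := by
  rw [myuniv_castSucc, Finset.erase_insert_of_ne (Fin.castSucc_lt_last i).ne',
    ← Fin.coe_castSuccEmb, ← Finset.map_erase,
    Finset.prod_insert (last_not_mem_map _), Finset.prod_map, mul_comm]

lemma isUnit_prod {M : Type*} [CommMonoid M] {α : Type*} (s : Finset α) (g : α → M)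
    (h : ∀ a ∈ s, IsUnit (g a)) : IsUnit (∏ a ∈ s, g a) := by
  classical
  induction s using Finset.induction with
  | empty => simp
  | insert _ _ hn ih =>
    rw [Finset.prod_insert hn]
    exact (h _ (Finset.mem_insert_self _ _)).mul (ih fun a ha => h a (Finset.mem_insert_of_mem ha))

lemma key_inverse (P u w d : K) (hP : IsUnit P) (hu : IsUnit u)
    (hw : IsUnit w) (hduw : d = w - u) (hd : IsUnit d) :
    Ring.inverse (P * u * w) =
      Ring.inverse d * Ring.inverse (P * u) - Ring.inverse d * Ring.inverse (P * w) := by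
  subst hduw
  have h1 := Ring.mul_inverse_cancel _ hu
  have h2 := Ring.mul_inverse_cancel _ hw
  have h3 := Ring.mul_inverse_cancel _ hd
  have h4 := Ring.mul_inverse_cancel _ hP
  rw [Ring.mul_inverse_rev, Ring.mul_inverse_rev, Ring.mul_inverse_rev]
  set a := Ring.inverse P
  set b := Ring.inverse u
  set c := Ring.inverse w
  set e := Ring.inverse (w - u)
  linear_combination (e * a * b) * h2 - (e * a * c) * h1 - (a * b * c) * h3

lemma inverse_neg' (a : K) (h : IsUnit a) :
    Ring.inverse (-a) = - Ring.inverse a := by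
  apply h.neg.mul_left_cancel
  rw [Ring.mul_inverse_cancel _ h.neg, mul_neg, neg_mul, neg_neg, Ring.mul_inverse_cancel _ h]

variable {V : Type*} [AddCommGroup V] [Module K V]

def Xfun {n : ℕ} (v : Fin (n + 1) → V) (s : Fin (n + 1) → K) (i : Fin (n + 1)) : V :=
  ∑ j ∈ Finset.Iic i, (∏ ℓ ∈ Finset.Iio j, (s i - s ℓ)) • v j

lemma Xfun_congr {n : ℕ} {v v' : Fin (n + 1) → V} {s s' : Fin (n + 1) → K} {i : Fin (n + 1)}
    (hv : ∀ j, j ≤ i → v j = v' j) (hs : ∀ j, j ≤ i → s j = s' j) :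
    Xfun v s i = Xfun v' s' i := by
  unfold Xfun
  refine Finset.sum_congr rfl fun j hj => ?_
  rw [Finset.mem_Iic] at hj
  rw [hv j hj]
  congr 1
  refine Finset.prod_congr rfl fun ℓ hℓ => ?_
  rw [Finset.mem_Iio] at hℓ
  rw [hs i le_rfl, hs ℓ (le_of_lt (lt_of_lt_of_le hℓ hj))]

lemma argA {n : ℕ} (v : Fin (n + 2) → V) (s : Fin (n + 2) → K) (i : Fin (n + 1)) :
    Xfun (Fin.init v) (Fin.init s) i = Xfun v s (Fin.castSucc i) := by
  unfold Xfun
  rw [myIic_castSucc, Finset.sum_map]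
  refine Finset.sum_congr rfl fun j hj => ?_
  rw [Fin.coe_castSuccEmb, Fin.Iio_castSucc, Finset.prod_map]
  rfl

lemma argB_cs {k : ℕ} (v : Fin (k + 2) → V) (s : Fin (k + 2) → K) (i : Fin k)
    (w₀ : V) (c₀ : K) :
    Xfun (Function.update (Fin.init v) (Fin.last k) w₀)
      (Function.update (Fin.init s) (Fin.last k) c₀) (Fin.castSucc i)
      = Xfun v s (Fin.castSucc (Fin.castSucc i)) := by
  rw [← argA]
  apply Xfun_congr
  · intro j hj
    exact Function.update_of_ne (ne_of_lt (lt_of_le_of_lt hj (Fin.castSucc_lt_last i))) _ _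
  · intro j hj
    exact Function.update_of_ne (ne_of_lt (lt_of_le_of_lt hj (Fin.castSucc_lt_last i))) _ _

lemma argB_last {k : ℕ} (v : Fin (k + 2) → V) (s : Fin (k + 2) → K) :
    Xfun (Function.update (Fin.init v) (Fin.last k)
        (v (Fin.castSucc (Fin.last k)) +
          (s (Fin.last (k + 1)) - s (Fin.castSucc (Fin.last k))) • v (Fin.last (k + 1))))
      (Function.update (Fin.init s) (Fin.last k) (s (Fin.last (k + 1)))) (Fin.last k)
      = Xfun v s (Fin.last (k + 1)) := by
  unfold Xfun
  rw [myIic_last, myIic_last,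
    Fin.sum_univ_castSucc (n := k), Fin.sum_univ_castSucc (n := k + 1),
    Fin.sum_univ_castSucc (n := k)]
  simp only [Function.update_self]
  have hR : ∀ m : Fin (k + 2),
      ∏ ℓ ∈ Finset.Iio (Fin.last k),
        (s m - Function.update (Fin.init s) (Fin.last k) (s (Fin.last (k + 1))) ℓ)
      = ∏ ℓ : Fin k, (s m - s (Fin.castSucc (Fin.castSucc ℓ))) := by
    intro m
    rw [myIio_last, Finset.prod_map]
    refine Finset.prod_congr rfl fun ℓ _ => ?_
    rw [Fin.coe_castSuccEmb, Function.update_of_ne (Fin.castSucc_lt_last ℓ).ne]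
    rfl
  have h1 : ∀ j : Fin k,
      (∏ ℓ ∈ Finset.Iio (Fin.castSucc j),
          (s (Fin.last (k + 1)) -
            Function.update (Fin.init s) (Fin.last k) (s (Fin.last (k + 1))) ℓ)) •
        Function.update (Fin.init v) (Fin.last k)
          (v (Fin.castSucc (Fin.last k)) +
            (s (Fin.last (k + 1)) - s (Fin.castSucc (Fin.last k))) • v (Fin.last (k + 1)))
          (Fin.castSucc j)
      = (∏ ℓ ∈ Finset.Iio (Fin.castSucc (Fin.castSucc j)), (s (Fin.last (k + 1)) - s ℓ)) •
          v (Fin.castSucc (Fin.castSucc j)) := by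
    intro j
    rw [Function.update_of_ne (Fin.castSucc_lt_last j).ne, Fin.Iio_castSucc,
      Fin.Iio_castSucc, Fin.Iio_castSucc, Finset.prod_map, Finset.prod_map, Finset.prod_map]
    show (∏ ℓ ∈ Finset.Iio j, _) • Fin.init v (Fin.castSucc j) = _
    rw [show Fin.init v (Fin.castSucc j) = v (Fin.castSucc (Fin.castSucc j)) from rfl]
    congr 1
    refine Finset.prod_congr rfl fun ℓ _ => ?_
    rw [Fin.coe_castSuccEmb, Function.update_of_ne (Fin.castSucc_lt_last ℓ).ne]
    rfl
  rw [Finset.sum_congr rfl fun j _ => h1 j, hR, smul_add, smul_smul]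
  have h2 : ∏ ℓ ∈ Finset.Iio (Fin.castSucc (Fin.last k)), (s (Fin.last (k + 1)) - s ℓ)
      = ∏ ℓ : Fin k, (s (Fin.last (k + 1)) - s (Fin.castSucc (Fin.castSucc ℓ))) := by
    rw [Fin.Iio_castSucc, Finset.prod_map, myIio_last, Finset.prod_map]
    rfl
  have h3 : ∏ ℓ ∈ Finset.Iio (Fin.last (k + 1)), (s (Fin.last (k + 1)) - s ℓ)
      = (∏ ℓ : Fin k, (s (Fin.last (k + 1)) - s (Fin.castSucc (Fin.castSucc ℓ)))) *
          (s (Fin.last (k + 1)) - s (Fin.castSucc (Fin.last k))) := by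
    rw [myIio_last, Finset.prod_map, Fin.prod_univ_castSucc]
    rfl
  rw [h2, h3]
  abel

-- coefficient lemmas
lemma coeff_cs {k : ℕ} (s : Fin (k + 2) → K)
    (hs : ∀ i j, i ≠ j → IsUnit (s i - s j)) (i : Fin k) :
    Ring.inverse (∏ j ∈ Finset.univ.erase (Fin.castSucc (Fin.castSucc i)),
        (s (Fin.castSucc (Fin.castSucc i)) - s j))
      = Ring.inverse (s (Fin.castSucc (Fin.last k)) - s (Fin.last (k + 1))) *
          Ring.inverse (∏ j ∈ Finset.univ.erase (Fin.castSucc i),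
            (Fin.init s (Fin.castSucc i) - Fin.init s j))
        - Ring.inverse (s (Fin.castSucc (Fin.last k)) - s (Fin.last (k + 1))) *
          Ring.inverse (∏ j ∈ Finset.univ.erase (Fin.castSucc i),
            (Function.update (Fin.init s) (Fin.last k) (s (Fin.last (k + 1))) (Fin.castSucc i) -
              Function.update (Fin.init s) (Fin.last k) (s (Fin.last (k + 1))) j)) := by
  have hA : ∏ j ∈ Finset.univ.erase (Fin.castSucc i),
      (Fin.init s (Fin.castSucc i) - Fin.init s j)
      = (∏ j ∈ Finset.univ.erase i,
          (s (Fin.castSucc (Fin.castSucc i)) - s (Fin.castSucc (Fin.castSucc j)))) *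
        (s (Fin.castSucc (Fin.castSucc i)) - s (Fin.castSucc (Fin.last k))) := by
    rw [prod_erase_cs (fun j => Fin.init s (Fin.castSucc i) - Fin.init s j) i]
    rfl
  have hB : ∏ j ∈ Finset.univ.erase (Fin.castSucc i),
      (Function.update (Fin.init s) (Fin.last k) (s (Fin.last (k + 1))) (Fin.castSucc i) -
        Function.update (Fin.init s) (Fin.last k) (s (Fin.last (k + 1))) j)
      = (∏ j ∈ Finset.univ.erase i,
          (s (Fin.castSucc (Fin.castSucc i)) - s (Fin.castSucc (Fin.castSucc j)))) *
        (s (Fin.castSucc (Fin.castSucc i)) - s (Fin.last (k + 1))) := by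
    rw [prod_erase_cs (fun j =>
      Function.update (Fin.init s) (Fin.last k) (s (Fin.last (k + 1))) (Fin.castSucc i) -
        Function.update (Fin.init s) (Fin.last k) (s (Fin.last (k + 1))) j) i]
    rw [Function.update_self, Function.update_of_ne (Fin.castSucc_lt_last i).ne]
    congr 1
    · refine Finset.prod_congr rfl fun j _ => ?_
      rw [Function.update_of_ne (Fin.castSucc_lt_last j).ne]
      rfl
  have hL : ∏ j ∈ Finset.univ.erase (Fin.castSucc (Fin.castSucc i)),
      (s (Fin.castSucc (Fin.castSucc i)) - s j)
      = (∏ j ∈ Finset.univ.erase i,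
          (s (Fin.castSucc (Fin.castSucc i)) - s (Fin.castSucc (Fin.castSucc j)))) *
        (s (Fin.castSucc (Fin.castSucc i)) - s (Fin.castSucc (Fin.last k))) *
        (s (Fin.castSucc (Fin.castSucc i)) - s (Fin.last (k + 1))) := by
    rw [prod_erase_cs (fun j => s (Fin.castSucc (Fin.castSucc i)) - s j) (Fin.castSucc i),
      prod_erase_cs (fun j => s (Fin.castSucc (Fin.castSucc i)) - s (Fin.castSucc j)) i]
  rw [hA, hB, hL]
  apply key_inverse
  · exact isUnit_prod _ _ fun j hj => hs _ _
      fun h => (Finset.mem_erase.mp hj).1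
        (Fin.castSucc_injective _ (Fin.castSucc_injective _ h)).symm
  · exact hs _ _ fun h => (Fin.castSucc_lt_last i).ne (Fin.castSucc_injective _ h)
  · exact hs _ _ (Fin.castSucc_lt_last (Fin.castSucc i)).ne
  · ring
  · exact hs _ _ (Fin.castSucc_lt_last (Fin.last k)).ne

lemma coeff_Alast {k : ℕ} (s : Fin (k + 2) → K) :
    Ring.inverse (∏ j ∈ Finset.univ.erase (Fin.castSucc (Fin.last k)),
        (s (Fin.castSucc (Fin.last k)) - s j))
      = Ring.inverse (s (Fin.castSucc (Fin.last k)) - s (Fin.last (k + 1))) *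
          Ring.inverse (∏ j ∈ Finset.univ.erase (Fin.last k),
            (Fin.init s (Fin.last k) - Fin.init s j)) := by
  rw [prod_erase_cs (fun j => s (Fin.castSucc (Fin.last k)) - s j) (Fin.last k),
    Ring.mul_inverse_rev]
  rfl

lemma coeff_last {k : ℕ} (s : Fin (k + 2) → K)
    (hs : ∀ i j, i ≠ j → IsUnit (s i - s j)) :
    Ring.inverse (∏ j ∈ Finset.univ.erase (Fin.last (k + 1)),
        (s (Fin.last (k + 1)) - s j))
      = -(Ring.inverse (s (Fin.castSucc (Fin.last k)) - s (Fin.last (k + 1))) *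
          Ring.inverse (∏ j ∈ Finset.univ.erase (Fin.last k),
            (Function.update (Fin.init s) (Fin.last k) (s (Fin.last (k + 1))) (Fin.last k) -
              Function.update (Fin.init s) (Fin.last k) (s (Fin.last (k + 1))) j))) := by
  have hB : ∏ j ∈ Finset.univ.erase (Fin.last k),
      (Function.update (Fin.init s) (Fin.last k) (s (Fin.last (k + 1))) (Fin.last k) -
        Function.update (Fin.init s) (Fin.last k) (s (Fin.last (k + 1))) j)
      = ∏ j : Fin k, (s (Fin.last (k + 1)) - s (Fin.castSucc (Fin.castSucc j))) := by
    rw [prod_erase_last]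
    refine Finset.prod_congr rfl fun j _ => ?_
    rw [Function.update_self, Function.update_of_ne (Fin.castSucc_lt_last j).ne]
    rfl
  have hL : ∏ j ∈ Finset.univ.erase (Fin.last (k + 1)), (s (Fin.last (k + 1)) - s j)
      = -((∏ j : Fin k, (s (Fin.last (k + 1)) - s (Fin.castSucc (Fin.castSucc j)))) *
          (s (Fin.castSucc (Fin.last k)) - s (Fin.last (k + 1)))) := by
    rw [prod_erase_last, Fin.prod_univ_castSucc]
    ring
  rw [hB, hL, inverse_neg', Ring.mul_inverse_rev, mul_comm]
  exact (isUnit_prod _ _ fun j _ => hs _ _ (Fin.castSucc_lt_last (Fin.castSucc j)).ne').mul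
    (hs _ _ (Fin.castSucc_lt_last (Fin.last k)).ne)

lemma assemble {W : Type*} [AddCommGroup W] [Module K W] {m : ℕ}
    (d : K) (cL : Fin (m + 2) → K) (cA cB : Fin (m + 1) → K)
    (F : Fin (m + 2) → W) (FA FB : Fin (m + 1) → W)
    (hFA : ∀ i, FA i = F (Fin.castSucc i))
    (hFB1 : ∀ i : Fin m, FB (Fin.castSucc i) = F (Fin.castSucc (Fin.castSucc i)))
    (hFB2 : FB (Fin.last m) = F (Fin.last (m + 1)))
    (h1 : ∀ i : Fin m, cL (Fin.castSucc (Fin.castSucc i))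
        = d * cA (Fin.castSucc i) - d * cB (Fin.castSucc i))
    (h2 : cL (Fin.castSucc (Fin.last m)) = d * cA (Fin.last m))
    (h3 : cL (Fin.last (m + 1)) = -(d * cB (Fin.last m))) :
    ∑ i : Fin (m + 2), cL i • F i
      = d • (∑ i : Fin (m + 1), cA i • FA i - ∑ i : Fin (m + 1), cB i • FB i) := by
  rw [smul_sub, Finset.smul_sum, Finset.smul_sum,
    Fin.sum_univ_castSucc (n := m + 1), Fin.sum_univ_castSucc (n := m),
    Fin.sum_univ_castSucc (n := m), Fin.sum_univ_castSucc (n := m)]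
  simp only [hFA, hFB1, hFB2, smul_smul, h1, h2, h3, sub_smul, neg_smul,
    Finset.sum_sub_distrib]
  abel

end helpers

/-- The generalized divided difference `f^⟨k⟩(v; s)` of a map `f : V → W`. -/
noncomputable def gendd {K V W : Type*} [CommRing K]
    [AddCommGroup V] [Module K V] [AddCommGroup W] [Module K W]
    {k : ℕ} (f : V → W) (v : Fin (k + 1) → V) (s : Fin (k + 1) → K) : W :=
  ∑ i : Fin (k + 1),
    Ring.inverse (∏ j ∈ Finset.univ.erase i, (s i - s j)) •
      f (∑ j ∈ Finset.Iic i, (∏ ℓ ∈ Finset.Iio j, (s i - s ℓ)) • v j)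

theorem stmt16 {K V W : Type*} [CommRing K]
    [AddCommGroup V] [Module K V] [AddCommGroup W] [Module K W]
    {k : ℕ} (f : V → W) (v : Fin (k + 2) → V) (s : Fin (k + 2) → K)
    (hs : ∀ i j, i ≠ j → IsUnit (s i - s j)) :
    gendd f v s =
      Ring.inverse (s (Fin.castSucc (Fin.last k)) - s (Fin.last (k + 1))) •
        (gendd f (Fin.init v) (Fin.init s) -
          gendd f
            (Function.update (Fin.init v) (Fin.last k)
              (v (Fin.castSucc (Fin.last k)) +
                (s (Fin.last (k + 1)) - s (Fin.castSucc (Fin.last k))) •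
                  v (Fin.last (k + 1))))
            (Function.update (Fin.init s) (Fin.last k) (s (Fin.last (k + 1))))) := by
  exact assemble (Ring.inverse (s (Fin.castSucc (Fin.last k)) - s (Fin.last (k + 1))))
    (fun i => Ring.inverse (∏ j ∈ Finset.univ.erase i, (s i - s j)))
    (fun i => Ring.inverse (∏ j ∈ Finset.univ.erase i, (Fin.init s i - Fin.init s j)))
    (fun i => Ring.inverse (∏ j ∈ Finset.univ.erase i,
      (Function.update (Fin.init s) (Fin.last k) (s (Fin.last (k + 1))) i -
        Function.update (Fin.init s) (Fin.last k) (s (Fin.last (k + 1))) j)))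
    (fun i => f (Xfun v s i))
    (fun i => f (Xfun (Fin.init v) (Fin.init s) i))
    (fun i => f (Xfun
      (Function.update (Fin.init v) (Fin.last k)
        (v (Fin.castSucc (Fin.last k)) +
          (s (Fin.last (k + 1)) - s (Fin.castSucc (Fin.last k))) • v (Fin.last (k + 1))))
      (Function.update (Fin.init s) (Fin.last k) (s (Fin.last (k + 1)))) i))
    (fun i => congrArg f (argA v s i))
    (fun i => congrArg f (argB_cs v s i _ _))
    (congrArg f (argB_last v s))
    (fun i => coeff_cs s hs i)
    (coeff_Alast s)
    (coeff_last s hs)
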